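/- arXiv:2409.09137 — 3 statements merged into one kernel-verified Lean document; each statement's English description precedes it below -/
import Mathlib

section
/- Let C ∈ ℝ^{d×d} and Γ ∈ ℝ^{q×q} be symmetric positive definite, F ∈ ℝ^{q×d}, and set H := FᵀΓ⁻¹F, H̃ := C^{1/2} H C^{1/2}, C_post := (C⁻¹ + H)⁻¹, and K := C_post FᵀΓ⁻¹. Then trace(Kᵀ C⁻¹ K (F C Fᵀ + Γ)) = trace(H̃ (I + H̃)⁻¹). -/
open Matrix

/-- For a linear Gaussian inverse problem with prior covariance `C`, noise
covariance `Γ` and forward map `F`, setting `H = Fᵀ Γ⁻¹ F`,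
`H̃ = C^{1/2} H C^{1/2}` (with `S = C^{1/2}` the symmetric positive definite
square root of `C`), `C_post = (C⁻¹ + H)⁻¹` and `K = C_post Fᵀ Γ⁻¹`, one has
`trace (Kᵀ C⁻¹ K (F C Fᵀ + Γ)) = trace (H̃ (I + H̃)⁻¹)`. -/
theorem stmt_4 (d q : ℕ) (C : Matrix (Fin d) (Fin d) ℝ)
    (Γ : Matrix (Fin q) (Fin q) ℝ) (hC : C.PosDef) (hΓ : Γ.PosDef)
    (F : Matrix (Fin q) (Fin d) ℝ)
    (H : Matrix (Fin d) (Fin d) ℝ) (hH : H = Fᵀ * Γ⁻¹ * F)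
    (Cpost : Matrix (Fin d) (Fin d) ℝ) (hCpost : Cpost = (C⁻¹ + H)⁻¹)
    (K : Matrix (Fin d) (Fin q) ℝ) (hK : K = Cpost * Fᵀ * Γ⁻¹) :
    ∀ S : Matrix (Fin d) (Fin d) ℝ, S.PosDef → S * S = C →
      (Kᵀ * C⁻¹ * K * (F * C * Fᵀ + Γ)).trace
        = ((S * H * S) * (1 + S * H * S)⁻¹).trace := by
  intro S hS hSC
  have hCd : IsUnit C.det := (isUnit_iff_isUnit_det C).mp hC.isUnit
  have hΓd : IsUnit Γ.det := (isUnit_iff_isUnit_det Γ).mp hΓ.isUnit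
  have hSd : IsUnit S.det := (isUnit_iff_isUnit_det S).mp hS.isUnit
  -- H is positive semidefinite
  have hHps : H.PosSemidef := by
    rw [hH]
    have := (hΓ.inv.posSemidef).conjTranspose_mul_mul_same F
    rwa [Matrix.conjTranspose_eq_transpose_of_trivial] at this
  have hApd : (C⁻¹ + H).PosDef := hC.inv.add_posSemidef hHps
  have hAd : IsUnit (C⁻¹ + H).det := (isUnit_iff_isUnit_det _).mp hApd.isUnit
  -- Cpost * (C⁻¹ + H) = 1
  have hmul : Cpost * (C⁻¹ + H) = 1 := by
    rw [hCpost]; exact Matrix.nonsing_inv_mul _ hAd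
  have hΓ1 : Γ⁻¹ * Γ = 1 := Matrix.nonsing_inv_mul _ hΓd
  have hC1 : C⁻¹ * C = 1 := Matrix.nonsing_inv_mul _ hCd
  have hS1 : S⁻¹ * S = 1 := Matrix.nonsing_inv_mul _ hSd
  have hS2 : S * S⁻¹ = 1 := Matrix.mul_nonsing_inv _ hSd
  -- K * (F*C*Fᵀ + Γ) = C * Fᵀ
  have hkey : K * (F * C * Fᵀ + Γ) = C * Fᵀ := by
    have h1 : K * (F * C * Fᵀ + Γ) = Cpost * (H * (C * Fᵀ)) + Cpost * Fᵀ := by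
      rw [hK, hH]
      rw [Matrix.mul_add]
      congr 1
      · simp only [Matrix.mul_assoc]
      · calc Cpost * Fᵀ * Γ⁻¹ * Γ = Cpost * Fᵀ * (Γ⁻¹ * Γ) := by
              simp only [Matrix.mul_assoc]
          _ = Cpost * Fᵀ := by rw [hΓ1, Matrix.mul_one]
    have h2 : Cpost * (H * (C * Fᵀ)) + Cpost * Fᵀ
        = Cpost * (C⁻¹ + H) * (C * Fᵀ) := by
      rw [Matrix.mul_assoc, Matrix.add_mul, Matrix.mul_add]
      rw [← Matrix.mul_assoc C⁻¹ C Fᵀ, hC1, Matrix.one_mul, add_comm]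
    rw [h1, h2, hmul, Matrix.one_mul]
  -- LHS = trace (Cpost * H)
  have hKF : K * F = Cpost * H := by
    rw [hK, hH]; simp only [Matrix.mul_assoc]
  have hLHS : (Kᵀ * C⁻¹ * K * (F * C * Fᵀ + Γ)).trace = (Cpost * H).trace := by
    have : Kᵀ * C⁻¹ * K * (F * C * Fᵀ + Γ) = Kᵀ * Fᵀ := by
      calc Kᵀ * C⁻¹ * K * (F * C * Fᵀ + Γ)
          = Kᵀ * (C⁻¹ * (K * (F * C * Fᵀ + Γ))) := by simp only [Matrix.mul_assoc]
        _ = Kᵀ * (C⁻¹ * C * Fᵀ) := by rw [hkey]; simp only [Matrix.mul_assoc]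
        _ = Kᵀ * Fᵀ := by rw [hC1, Matrix.one_mul]
    rw [this, ← Matrix.transpose_mul, Matrix.trace_transpose, Matrix.trace_mul_comm, hKF]
  -- Cpost = S * (1 + S*H*S)⁻¹ * S
  have hCinv : C⁻¹ = S⁻¹ * S⁻¹ := by rw [← hSC, Matrix.mul_inv_rev]
  have hexp : C⁻¹ + H = S⁻¹ * (1 + S * H * S) * S⁻¹ := by
    rw [hCinv, Matrix.mul_add, Matrix.add_mul, Matrix.mul_one]
    congr 1
    symm
    calc S⁻¹ * (S * H * S) * S⁻¹
        = (S⁻¹ * S) * H * (S * S⁻¹) := by simp only [Matrix.mul_assoc]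
      _ = H := by rw [hS1, hS2, Matrix.one_mul, Matrix.mul_one]
  have hCpostS : Cpost = S * (1 + S * H * S)⁻¹ * S := by
    rw [hCpost, hexp, Matrix.mul_inv_rev, Matrix.mul_inv_rev,
      Matrix.nonsing_inv_nonsing_inv _ hSd]
    simp only [Matrix.mul_assoc]
  -- conclude
  rw [hLHS, hCpostS]
  have h3 : S * (1 + S * H * S)⁻¹ * S * H
      = (S * (1 + S * H * S)⁻¹) * (S * H) := by simp only [Matrix.mul_assoc]
  rw [h3, Matrix.trace_mul_comm]
  congr 1
  simp only [Matrix.mul_assoc]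
end

section
/- Let N be a positive integer, 1 ≤ k ≤ N, and fix a binary vector ξ ∈ {0,1}^N with Σᵢ ξᵢ = k and an index j. For p ∈ (0,1)^N define wᵢ = pᵢ/(1 − pᵢ), e_k(w) the k-th elementary symmetric polynomial, log P(ξ | p, k) = Σᵢ ξᵢ log wᵢ − log e_k(w), and πⱼ = wⱼ e_{k−1}(w_{−j}) / e_k(w). Then the partial derivative of p ↦ log P(ξ | p, k) with respect to pⱼ exists and equals (ξⱼ − πⱼ)(1 + wⱼ)² / wⱼ. -/
open Finset

/-- The weights `wᵢ = pᵢ/(1 − pᵢ)` of the conditional Bernoulli model. -/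
noncomputable def cbWeight {N : ℕ} (p : Fin N → ℝ) (i : Fin N) : ℝ :=
  p i / (1 - p i)

/-- `e_k(w(p))`: the `k`-th elementary symmetric polynomial of the weights. -/
noncomputable def cbEsymm {N : ℕ} (k : ℕ) (p : Fin N → ℝ) : ℝ :=
  ∑ S ∈ (univ : Finset (Fin N)).powersetCard k, ∏ i ∈ S, cbWeight p i

/-- `e_{k−1}(w(p)_{−j})`: the `(k−1)`-th elementary symmetric polynomial of the
weights with the `j`-th entry omitted. -/
noncomputable def cbEsymmErase {N : ℕ} (k : ℕ) (j : Fin N) (p : Fin N → ℝ) : ℝ :=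
  ∑ S ∈ ((univ : Finset (Fin N)).erase j).powersetCard (k - 1),
    ∏ i ∈ S, cbWeight p i

/-- `log P(ξ | p, k) = Σᵢ ξᵢ log wᵢ − log e_k(w)`. -/
noncomputable def cbLogPMF {N : ℕ} (k : ℕ) (ξ : Fin N → Fin 2)
    (p : Fin N → ℝ) : ℝ :=
  (∑ i, (ξ i : ℕ) * Real.log (cbWeight p i)) - Real.log (cbEsymm k p)

/-- `πⱼ = wⱼ e_{k−1}(w_{−j}) / e_k(w)`: first-order inclusion probability. -/
noncomputable def cbInclusion {N : ℕ} (k : ℕ) (j : Fin N) (p : Fin N → ℝ) : ℝ :=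
  cbWeight p j * cbEsymmErase k j p / cbEsymm k p

lemma cbWeight_update {N : ℕ} (p : Fin N → ℝ) (j : Fin N) (t : ℝ) (i : Fin N) :
    cbWeight (Function.update p j t) i = if i = j then t / (1 - t) else cbWeight p i := by
  unfold cbWeight
  rw [Function.update_apply]
  split <;> simp

lemma cbEsymm_split {N : ℕ} (k : ℕ) (hk : 1 ≤ k) (j : Fin N) (q : Fin N → ℝ) :
    cbEsymm k q =
      (∑ S ∈ ((univ : Finset (Fin N)).erase j).powersetCard k, ∏ i ∈ S, cbWeight q i)
      + cbWeight q j * cbEsymmErase k j q := by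
  obtain ⟨m, rfl⟩ : ∃ m, k = m + 1 := ⟨k - 1, (Nat.succ_pred_eq_of_pos hk).symm⟩
  unfold cbEsymm
  nth_rewrite 1 [show (univ : Finset (Fin N)) = insert j (univ.erase j) from
    (insert_erase (mem_univ j)).symm]
  rw [powersetCard_succ_insert (notMem_erase _ _)]
  rw [sum_union]
  · congr 1
    rw [sum_image (fun S hS T hT hST => by
        simp only [mem_coe, mem_powersetCard] at hS hT
        have hjS : j ∉ S := fun h => (notMem_erase j univ) (hS.1 h)
        have hjT : j ∉ T := fun h => (notMem_erase j univ) (hT.1 h)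
        rw [← erase_insert hjS, hST, erase_insert hjT])]
    unfold cbEsymmErase
    rw [Nat.add_sub_cancel, mul_sum]
    refine sum_congr rfl fun S hS => ?_
    have hjS : j ∉ S := fun h =>
      (notMem_erase j univ) ((mem_powersetCard.mp hS).1 h)
    rw [prod_insert hjS]
  · rw [disjoint_left]
    intro S hS hS'
    obtain ⟨T, hT, rfl⟩ := mem_image.mp hS'
    exact (notMem_erase j univ) ((mem_powersetCard.mp hS).1 (mem_insert_self j T))

/-- For a fixed binary design `ξ` with `k` active entries and `p ∈ (0,1)^N`,
the partial derivative of `p ↦ log P(ξ | p, k)` with respect to `pⱼ` exists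
and equals `(ξⱼ − πⱼ)(1 + wⱼ)² / wⱼ`. -/
theorem stmt_11 (N : ℕ) (hN : 0 < N) (k : ℕ) (hk1 : 1 ≤ k) (hkN : k ≤ N)
    (ξ : Fin N → Fin 2) (hξ : (∑ i, (ξ i : ℕ)) = k) (j : Fin N)
    (p : Fin N → ℝ) (hp : ∀ i, p i ∈ Set.Ioo (0 : ℝ) 1) :
    HasDerivAt (fun t : ℝ => cbLogPMF k ξ (Function.update p j t))
      (((ξ j : ℕ) - cbInclusion k j p)
        * (1 + cbWeight p j) ^ 2 / cbWeight p j)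
      (p j) := by
  obtain ⟨hp0, hp1⟩ := hp j
  have h1p : (1 : ℝ) - p j ≠ 0 := by linarith
  have hwpos : 0 < cbWeight p j := div_pos hp0 (by linarith)
  have hwne : cbWeight p j ≠ 0 := ne_of_gt hwpos
  -- positivity of weights
  have hwipos : ∀ i, 0 < cbWeight p i := fun i => by
    obtain ⟨h0, h1⟩ := hp i
    exact div_pos h0 (by linarith)
  set A : ℝ := ∑ S ∈ ((univ : Finset (Fin N)).erase j).powersetCard k,
      ∏ i ∈ S, cbWeight p i with hA
  set B : ℝ := cbEsymmErase k j p with hB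
  set C : ℝ := ∑ i ∈ (univ : Finset (Fin N)).erase j,
      (ξ i : ℕ) * Real.log (cbWeight p i) with hC
  have hAnn : 0 ≤ A := sum_nonneg fun S _ => prod_nonneg fun i _ => (hwipos i).le
  have hBnn : 0 ≤ B := sum_nonneg fun S _ => prod_nonneg fun i _ => (hwipos i).le
  have hEsplit : cbEsymm k p = A + cbWeight p j * B := cbEsymm_split k hk1 j p
  have hEpos : 0 < cbEsymm k p := by
    unfold cbEsymm
    apply sum_pos (fun S _ => prod_pos fun i _ => hwipos i)
    rw [← card_pos, card_powersetCard]
    exact Nat.choose_pos (by simpa using hkN)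
  have hEne : cbEsymm k p ≠ 0 := ne_of_gt hEpos
  -- rewrite the function
  have hfun : ∀ t : ℝ, cbLogPMF k ξ (Function.update p j t) =
      (C + (ξ j : ℕ) * Real.log (t / (1 - t))) - Real.log (A + t / (1 - t) * B) := by
    intro t
    unfold cbLogPMF
    have hsum : (∑ i, (ξ i : ℕ) * Real.log (cbWeight (Function.update p j t) i))
        = C + (ξ j : ℕ) * Real.log (t / (1 - t)) := by
      rw [← Finset.sum_erase_add _ _ (mem_univ j), cbWeight_update, if_pos rfl]
      congr 1
      refine sum_congr rfl fun i hi => ?_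
      rw [cbWeight_update, if_neg (mem_erase.mp hi).1]
    have hE : cbEsymm k (Function.update p j t) = A + t / (1 - t) * B := by
      rw [cbEsymm_split k hk1 j, cbWeight_update, if_pos rfl]
      congr 1
      · refine sum_congr rfl fun S hS => prod_congr rfl fun i hi => ?_
        have hij : i ≠ j :=
          (mem_erase.mp ((mem_powersetCard.mp hS).1 hi)).1
        rw [cbWeight_update, if_neg hij]
      · congr 1
        unfold cbEsymmErase
        refine sum_congr rfl fun S hS => prod_congr rfl fun i hi => ?_
        have hij : i ≠ j :=
          (mem_erase.mp ((mem_powersetCard.mp hS).1 hi)).1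
        rw [cbWeight_update, if_neg hij]
    rw [hsum, hE]
  have hwval : p j / (1 - p j) = cbWeight p j := rfl
  -- derivative of t ↦ t/(1-t)
  have hd : HasDerivAt (fun t : ℝ => t / (1 - t)) ((1 + cbWeight p j) ^ 2) (p j) := by
    have hden : HasDerivAt (fun t : ℝ => 1 - t) (-1 : ℝ) (p j) := by
      simpa using (hasDerivAt_id' (p j)).const_sub (1:ℝ)
    have hd0 := (hasDerivAt_id' (p j)).div hden h1p
    refine hd0.congr_deriv ?_
    unfold cbWeight
    field_simp
    ring
  have hlog1 : HasDerivAt (fun t : ℝ => Real.log (t / (1 - t)))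
      ((1 + cbWeight p j) ^ 2 / cbWeight p j) (p j) := by
    have := hd.log (by rw [hwval]; exact hwne)
    simpa [hwval] using this
  have hlog2 : HasDerivAt (fun t : ℝ => Real.log (A + t / (1 - t) * B))
      ((1 + cbWeight p j) ^ 2 * B / cbEsymm k p) (p j) := by
    have h2 : HasDerivAt (fun t : ℝ => A + t / (1 - t) * B)
        ((1 + cbWeight p j) ^ 2 * B) (p j) := (hd.mul_const B).const_add A
    have := h2.log (by rw [hwval, ← hEsplit]; exact hEne)
    simpa [hwval, ← hEsplit] using this
  have hmain : HasDerivAt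
      (fun t : ℝ => (C + (ξ j : ℕ) * Real.log (t / (1 - t))) - Real.log (A + t / (1 - t) * B))
      ((ξ j : ℕ) * ((1 + cbWeight p j) ^ 2 / cbWeight p j)
        - (1 + cbWeight p j) ^ 2 * B / cbEsymm k p) (p j) :=
    ((hlog1.const_mul ((ξ j : ℕ) : ℝ)).const_add C).sub hlog2
  have heq : ((ξ j : ℕ) : ℝ) * ((1 + cbWeight p j) ^ 2 / cbWeight p j)
        - (1 + cbWeight p j) ^ 2 * B / cbEsymm k p
      = ((ξ j : ℕ) - cbInclusion k j p) * (1 + cbWeight p j) ^ 2 / cbWeight p j := by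
    unfold cbInclusion
    rw [← hB]
    field_simp
  rw [← heq]
  exact hmain.congr_of_eventuallyEq (Filter.Eventually.of_forall fun t => (hfun t))
end

section
/- Let N be a positive integer, 1 ≤ k ≤ N, and f a real-valued function on S(k) := {ξ ∈ {0,1}^N : Σᵢ ξᵢ = k}. For p ∈ (0,1)^N define wᵢ = pᵢ/(1 − pᵢ) and F_k(p) := Σ_{ξ ∈ S(k)} f(ξ) (Πᵢ wᵢ^{ξᵢ}) / e_k(w), where e_k is the k-th elementary symmetric polynomial. Then sup over p ∈ (0,1)^N of F_k(p) equals max over ξ ∈ S(k) of f(ξ). -/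
open Finset Filter Topology

lemma fin2_val (x : Fin 2) : (x : ℕ) = if x = 1 then 1 else 0 := by
  fin_cases x <;> rfl

lemma fin2_ne_one (x : Fin 2) (h : x ≠ 1) : x = 0 := by
  fin_cases x <;> simp_all

lemma prod_pow_eq {N : ℕ} (g : Fin N → ℝ) (ξ : Fin N → Fin 2) :
    ∏ i, g i ^ (ξ i : ℕ) = ∏ i ∈ univ.filter (fun i => ξ i = 1), g i := by
  rw [Finset.prod_filter]
  refine Finset.prod_congr rfl fun i _ => ?_
  rw [fin2_val]
  split <;> simp

lemma sum_val_eq {N : ℕ} (ξ : Fin N → Fin 2) :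
    (∑ i, (ξ i : ℕ)) = (univ.filter (fun i => ξ i = 1)).card := by
  rw [Finset.card_filter]
  exact Finset.sum_congr rfl fun i _ => fin2_val _

lemma esymm_eq {N k : ℕ} (g : Fin N → ℝ) :
    (∑ S ∈ (univ : Finset (Fin N)).powersetCard k, ∏ i ∈ S, g i)
    = ∑ ξ ∈ univ.filter (fun ξ : Fin N → Fin 2 => (∑ i, (ξ i : ℕ)) = k),
        ∏ i, g i ^ (ξ i : ℕ) := by
  refine Finset.sum_nbij' (i := fun S => fun i => if i ∈ S then (1 : Fin 2) else 0)
    (j := fun ξ => univ.filter (fun i => ξ i = 1)) ?_ ?_ ?_ ?_ ?_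
  · intro S hS
    simp only [Finset.mem_powersetCard_univ] at hS
    simp only [Finset.mem_filter, Finset.mem_univ, true_and]
    rw [← hS]
    have hcast : ∀ x : Fin N, (Fin.val (if x ∈ S then (1:Fin 2) else (0:Fin 2)))
        = if x ∈ S then 1 else 0 := fun x => by split <;> rfl
    rw [Finset.sum_congr rfl fun x _ => hcast x, Finset.sum_ite_mem,
      Finset.univ_inter]
    simp
  · intro ξ hξ
    simp only [Finset.mem_filter, Finset.mem_univ, true_and] at hξ
    simp [Finset.mem_powersetCard_univ, ← sum_val_eq, hξ]
  · intro S hS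
    ext i
    simp
  · intro ξ hξ
    funext i
    by_cases h : ξ i = 1
    · simp [h]
    · simp [h, fin2_ne_one _ h]
  · intro S hS
    rw [prod_pow_eq]
    congr 1
    ext i
    simp

/-- Equivalence of the budget-constrained probabilistic ROED policy
optimization with the original budget-constrained binary maximization: the
supremum over policies `p ∈ (0,1)^N` of the conditional Bernoulli expectation
`F_k(p) = Σ_{ξ ∈ S(k)} f(ξ) (Πᵢ wᵢ^{ξᵢ})/e_k(w)` equals the maximum of `f`
over the binary designs with exactly `k` active entries. -/
theorem stmt_16 (N : ℕ) (hN : 0 < N) (k : ℕ) (hk1 : 1 ≤ k) (hkN : k ≤ N)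
    (f : (Fin N → Fin 2) → ℝ)
    (Fk : (Fin N → ℝ) → ℝ)
    (hFk : ∀ p, Fk p =
      ∑ ξ ∈ univ.filter (fun ξ : Fin N → Fin 2 => (∑ i, (ξ i : ℕ)) = k),
        f ξ * (∏ i, cbWeight p i ^ (ξ i : ℕ)) / cbEsymm k p)
    (hne : (univ.filter
      (fun ξ : Fin N → Fin 2 => (∑ i, (ξ i : ℕ)) = k)).Nonempty) :
    IsLUB {y : ℝ | ∃ p : Fin N → ℝ,
        (∀ i, p i ∈ Set.Ioo (0 : ℝ) 1) ∧ Fk p = y}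
      ((univ.filter
        (fun ξ : Fin N → Fin 2 => (∑ i, (ξ i : ℕ)) = k)).sup' hne f) := by
  set Sk := univ.filter (fun ξ : Fin N → Fin 2 => (∑ i, (ξ i : ℕ)) = k) with hSk
  set M := Sk.sup' hne f with hM
  constructor
  · -- upper bound
    rintro y ⟨p, hp, rfl⟩
    have hw : ∀ i, 0 < cbWeight p i := fun i =>
      div_pos (hp i).1 (by linarith [(hp i).2])
    have hWpos : ∀ ξ : Fin N → Fin 2, 0 < ∏ i, cbWeight p i ^ (ξ i : ℕ) :=
      fun ξ => Finset.prod_pos fun i _ => pow_pos (hw i) _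
    have hE : cbEsymm k p = ∑ ξ ∈ Sk, ∏ i, cbWeight p i ^ (ξ i : ℕ) :=
      esymm_eq _
    have hEpos : 0 < cbEsymm k p := by
      rw [hE]; exact Finset.sum_pos (fun ξ _ => hWpos ξ) hne
    rw [hFk, ← Finset.sum_div, div_le_iff₀ hEpos]
    calc (∑ ξ ∈ Sk, f ξ * ∏ i, cbWeight p i ^ (ξ i : ℕ))
        ≤ ∑ ξ ∈ Sk, M * ∏ i, cbWeight p i ^ (ξ i : ℕ) := by
          refine Finset.sum_le_sum fun ξ hξ => ?_
          exact mul_le_mul_of_nonneg_right (Finset.le_sup' f hξ) (hWpos ξ).le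
      _ = M * cbEsymm k p := by rw [← Finset.mul_sum, hE]
  · -- least upper bound
    intro b hb
    obtain ⟨ξs, hξs, hMax⟩ := Finset.exists_mem_eq_sup' hne f
    rw [hM, hMax]
    have hξsk : (∑ i, (ξs i : ℕ)) = k := by
      simpa [hSk] using hξs
    set A := univ.filter (fun i => ξs i = 1) with hA
    have hAcard : A.card = k := by rw [hA, ← sum_val_eq, hξsk]
    -- the family of policies
    set p : ℝ → Fin N → ℝ := fun t i => if ξs i = 1 then t / (t + 1) else 1/2
      with hpdef
    have hpIoo : ∀ t : ℝ, 0 < t → ∀ i, p t i ∈ Set.Ioo (0 : ℝ) 1 := by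
      intro t ht i
      simp only [hpdef]
      split
      · constructor
        · positivity
        · rw [div_lt_one (by linarith)]; linarith
      · norm_num
    have hwEq : ∀ t : ℝ, 0 < t → ∀ i,
        cbWeight (p t) i = if ξs i = 1 then t else 1 := by
      intro t ht i
      simp only [cbWeight, hpdef]
      split
      · have h1 : (1 : ℝ) - t / (t + 1) = 1 / (t + 1) := by
          field_simp; ring
        rw [h1]
        field_simp
      · norm_num
    -- exponent function
    set a : (Fin N → Fin 2) → ℕ :=
      fun ξ => ((univ.filter (fun i => ξ i = 1)) ∩ A).card with hadef
    have hWt : ∀ t : ℝ, 0 < t → ∀ ξ : Fin N → Fin 2,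
        (∏ i, cbWeight (p t) i ^ (ξ i : ℕ)) = t ^ a ξ := by
      intro t ht ξ
      rw [prod_pow_eq]
      have : ∀ i ∈ univ.filter (fun i => ξ i = 1),
          cbWeight (p t) i = if i ∈ A then t else 1 := by
        intro i _
        rw [hwEq t ht i]
        simp [hA]
      rw [Finset.prod_congr rfl this, Finset.prod_ite, Finset.prod_const,
        Finset.prod_const, one_pow, mul_one, Finset.filter_mem_eq_inter,
        hadef]
    have haK : ∀ ξ ∈ Sk, a ξ ≤ k := by
      intro ξ hξ
      have hc : (univ.filter (fun i => ξ i = 1)).card = k := by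
        rw [← sum_val_eq]; simpa [hSk] using hξ
      calc a ξ ≤ (univ.filter (fun i => ξ i = 1)).card :=
            Finset.card_le_card (Finset.inter_subset_left)
        _ = k := hc
    have haEq : a ξs = k := by
      rw [hadef]
      simp only [← hA, Finset.inter_self]
      exact hAcard
    have haLt : ∀ ξ ∈ Sk, ξ ≠ ξs → a ξ < k := by
      intro ξ hξ hne'
      rcases lt_or_eq_of_le (haK ξ hξ) with h | h
      · exact h
      · exfalso
        apply hne'
        have hc : (univ.filter (fun i => ξ i = 1)).card = k := by
          rw [← sum_val_eq]; simpa [hSk] using hξ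
        have hsub : (univ.filter (fun i => ξ i = 1)) ∩ A
            ⊆ univ.filter (fun i => ξ i = 1) := Finset.inter_subset_left
        have heq1 : (univ.filter (fun i => ξ i = 1)) ∩ A
            = univ.filter (fun i => ξ i = 1) :=
          Finset.eq_of_subset_of_card_le hsub (le_of_eq (hc.trans h.symm))
        have hsubA : univ.filter (fun i => ξ i = 1) ⊆ A := by
          rw [← heq1]; exact Finset.inter_subset_right
        have heq2 : univ.filter (fun i => ξ i = 1) = A :=
          Finset.eq_of_subset_of_card_le hsubA (by rw [hAcard, hc])
        funext i
        by_cases h1 : ξ i = 1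
        · have hiA : i ∈ A := by rw [← heq2]; simp [h1]
          rw [hA, Finset.mem_filter] at hiA
          rw [h1, hiA.2]
        · have h2 : i ∉ A := fun hiA => h1 (by
            have : i ∈ univ.filter (fun i => ξ i = 1) := heq2 ▸ hiA
            simpa using this)
          rw [hA, Finset.mem_filter] at h2
          push_neg at h2
          have h3 := h2 (Finset.mem_univ i)
          rw [fin2_ne_one _ h1, fin2_ne_one _ h3]
    -- the value of Fk along the family
    have hFkt : ∀ t : ℝ, 0 < t →
        Fk (p t) = (∑ ξ ∈ Sk, f ξ * t ^ a ξ) / (∑ ξ ∈ Sk, t ^ a ξ) := by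
      intro t ht
      have hE : cbEsymm (N := N) k (p t) = ∑ ξ ∈ Sk, t ^ a ξ := by
        rw [cbEsymm, esymm_eq]
        exact Finset.sum_congr rfl fun ξ _ => hWt t ht ξ
      rw [hFk, ← Finset.sum_div, hE]
      congr 1
      exact Finset.sum_congr rfl fun ξ _ => by rw [hWt t ht ξ]
    -- limits
    have h1 : Tendsto (fun t : ℝ => (∑ ξ ∈ Sk, f ξ * t ^ a ξ) / t ^ k)
        atTop (𝓝 (f ξs)) := by
      have : (f ξs) = ∑ ξ ∈ Sk, (if ξ = ξs then f ξs else 0) := by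
        rw [Finset.sum_ite_eq' Sk ξs (fun _ => f ξs)]
        simp [hξs]
      rw [this]
      have heq : ∀ᶠ t : ℝ in atTop,
          (∑ ξ ∈ Sk, f ξ * t ^ a ξ) / t ^ k
          = ∑ ξ ∈ Sk, f ξ * (t ^ a ξ / t ^ k) := by
        filter_upwards with t
        rw [Finset.sum_div]
        exact Finset.sum_congr rfl fun ξ _ => (mul_div_assoc _ _ _)
      rw [tendsto_congr' heq]
      refine tendsto_finset_sum _ fun ξ hξ => ?_
      by_cases hcase : ξ = ξs
      · subst hcase
        rw [haEq]
        simp only [if_pos rfl]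
        have : ∀ᶠ t : ℝ in atTop, f ξ * (t ^ k / t ^ k) = f ξ := by
          filter_upwards [eventually_gt_atTop (0 : ℝ)] with t ht
          rw [div_self (pow_ne_zero _ ht.ne'), mul_one]
        exact (tendsto_congr' this).mpr tendsto_const_nhds
      · simp only [if_neg hcase]
        have := (tendsto_pow_div_pow_atTop_zero (𝕜 := ℝ)
          (haLt ξ hξ hcase)).const_mul (f ξ)
        simpa using this
    have h2 : Tendsto (fun t : ℝ => (∑ ξ ∈ Sk, t ^ a ξ) / t ^ k)
        atTop (𝓝 1) := by
      have hone : (1 : ℝ) = ∑ ξ ∈ Sk, (if ξ = ξs then (1:ℝ) else 0) := by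
        rw [Finset.sum_ite_eq' Sk ξs (fun _ => (1:ℝ))]
        simp [hξs]
      rw [hone]
      have heq : ∀ᶠ t : ℝ in atTop,
          (∑ ξ ∈ Sk, t ^ a ξ) / t ^ k = ∑ ξ ∈ Sk, t ^ a ξ / t ^ k := by
        filter_upwards with t
        rw [Finset.sum_div]
      rw [tendsto_congr' heq]
      refine tendsto_finset_sum _ fun ξ hξ => ?_
      by_cases hcase : ξ = ξs
      · subst hcase
        rw [haEq]
        simp only [if_pos rfl]
        have : ∀ᶠ t : ℝ in atTop, t ^ k / t ^ k = 1 := by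
          filter_upwards [eventually_gt_atTop (0 : ℝ)] with t ht
          rw [div_self (pow_ne_zero _ ht.ne')]
        exact (tendsto_congr' this).mpr tendsto_const_nhds
      · simp only [if_neg hcase]
        exact tendsto_pow_div_pow_atTop_zero (haLt ξ hξ hcase)
    have hkey : Tendsto (fun t : ℝ => Fk (p t)) atTop (𝓝 (f ξs)) := by
      have := h1.div h2 one_ne_zero
      rw [div_one] at this
      refine this.congr' ?_
      filter_upwards [eventually_gt_atTop (0 : ℝ)] with t ht
      rw [hFkt t ht]
      simp only [Pi.div_apply]
      rw [div_div_div_cancel_right₀ (pow_ne_zero k ht.ne')]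
    refine le_of_tendsto hkey ?_
    filter_upwards [eventually_gt_atTop (0 : ℝ)] with t ht
    exact hb ⟨p t, hpIoo t ht, rfl⟩
end
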